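/- Let Υ be a tree and let ‖·‖ be a norm on C₀(Υ) equivalent to the supremum norm which has the Kadec property. Then the associated function μ has no bad points. -/

import Mathlib

open Filter Topology Set

noncomputable section

/-- `n` is a norm on `X` equivalent to the given norm. -/
def IsEquivNorm {X : Type*} [SeminormedAddCommGroup X] [Module ℝ X] (n : X → ℝ) : Prop :=
  (∀ (a : ℝ) (x : X), n (a • x) = |a| * n x) ∧
  (∀ x y : X, n (x + y) ≤ n x + n y) ∧
  ∃ c C : ℝ, 0 < c ∧ ∀ x : X, c * ‖x‖ ≤ n x ∧ n x ≤ C * ‖x‖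

/-- Local uniform convexity of a norm-like function `n`. -/
def IsLUR {X : Type*} [AddCommGroup X] (n : X → ℝ) : Prop :=
  ∀ (x : X) (xs : ℕ → X),
    Tendsto (fun k => n (xs k)) atTop (𝓝 (n x)) →
    Tendsto (fun k => n (x + xs k)) atTop (𝓝 (2 * n x)) →
    Tendsto (fun k => n (x - xs k)) atTop (𝓝 0)

/-- Midpoint local uniform convexity. -/
def IsMLUR {X : Type*} [AddCommGroup X] (n : X → ℝ) : Prop :=
  ∀ (x : X) (hs : ℕ → X),
    Tendsto (fun k => n (x + hs k)) atTop (𝓝 (n x)) →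
    Tendsto (fun k => n (x - hs k)) atTop (𝓝 (n x)) →
    Tendsto (fun k => n (hs k)) atTop (𝓝 0)

/-- Strict convexity of a norm-like function `n`. -/
def IsStrictConvexNorm {X : Type*} [AddCommGroup X] [Module ℝ X] (n : X → ℝ) : Prop :=
  ∀ x y : X, n x = n y → n ((2⁻¹ : ℝ) • (x + y)) = n x → x = y

/-- The dual norm of `n` on the continuous dual of `X`. -/
def dualNorm {X : Type*} [SeminormedAddCommGroup X] [NormedSpace ℝ X] (n : X → ℝ)
    (ξ : X →L[ℝ] ℝ) : ℝ :=
  sSup ((fun x => ξ x) '' {x : X | n x ≤ 1})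

/-- Weak local uniform convexity. -/
def IsWLUR {X : Type*} [SeminormedAddCommGroup X] [NormedSpace ℝ X] (n : X → ℝ) : Prop :=
  ∀ (x : X) (xs : ℕ → X),
    Tendsto (fun k => n (xs k)) atTop (𝓝 (n x)) →
    Tendsto (fun k => n (x + xs k)) atTop (𝓝 (2 * n x)) →
    ∀ ξ : X →L[ℝ] ℝ, Tendsto (fun k => ξ (xs k)) atTop (𝓝 (ξ x))

/-- The weak topology of a normed space: the coarsest topology making all continuous
linear functionals continuous. -/
def weakTopology (X : Type*) [SeminormedAddCommGroup X] [NormedSpace ℝ X] :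
    TopologicalSpace X :=
  ⨅ ξ : X →L[ℝ] ℝ, TopologicalSpace.induced (fun x => ξ x) inferInstance

/-- The Kadec property: weak and norm topologies coincide on the unit sphere of `n`. -/
def IsKadec {X : Type*} [SeminormedAddCommGroup X] [NormedSpace ℝ X] (n : X → ℝ) : Prop :=
  TopologicalSpace.induced (Subtype.val : {x : X // n x = 1} → X) (weakTopology X) =
    TopologicalSpace.induced (Subtype.val : {x : X // n x = 1} → X) inferInstance

/-- A tree: every set of strict predecessors is well-ordered. -/
def IsTree (Υ : Type*) [PartialOrder Υ] : Prop :=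
  ∀ t : Υ, IsWellOrder {s : Υ // s < t} (· < ·)

/-- A Hausdorff tree: points whose predecessor set is nonempty with no greatest element
are determined by their sets of strict predecessors. -/
def IsHausdorffTree (Υ : Type*) [PartialOrder Υ] : Prop :=
  ∀ t t' : Υ, (Set.Iio t).Nonempty → (∀ s, s < t → ∃ s', s < s' ∧ s' < t) →
    Set.Iio t = Set.Iio t' → t = t'

/-- The locally compact topology of a tree: the coarsest topology in which every
interval `(0, t]` is both open and closed. -/
def treeTopology (Υ : Type*) [PartialOrder Υ] : TopologicalSpace Υ :=
  TopologicalSpace.generateFrom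
    ({S | ∃ t : Υ, S = Set.Iic t} ∪ {S | ∃ t : Υ, S = (Set.Iic t)ᶜ})

/-- The tree `Υ` carrying its locally compact topology. -/
def TreeSpace (Υ : Type*) [PartialOrder Υ] : Type _ := Υ

instance (Υ : Type*) [PartialOrder Υ] : TopologicalSpace (TreeSpace Υ) := treeTopology Υ

/-- `C₀(Υ)`: continuous real functions on the tree vanishing at infinity, with sup norm. -/
abbrev C0Tree (Υ : Type*) [PartialOrder Υ] := ZeroAtInftyContinuousMap (TreeSpace Υ) ℝ

/-- Identification of the tree and its topological incarnation. -/
def toTree {Υ : Type*} [PartialOrder Υ] (t : Υ) : TreeSpace Υ := t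

/-- `t` is a good point for `ρ`: off a finite set of immediate successors of `t`,
`ρ` is bounded away above `ρ t`.  A bad point is a point that is not good. -/
def GoodPoint {Υ : Type*} [PartialOrder Υ] (ρ : Υ → ℝ) (t : Υ) : Prop :=
  ∃ (F : Finset Υ) (c : ℝ), ρ t < c ∧ ∀ u : Υ, t ⋖ u → u ∉ F → c ≤ ρ u

/-- A subset `Γ` of a tree is ever-branching if no `t ∈ Γ` has totally ordered
set of successors within `Γ`. -/
def EverBranching {Υ : Type*} [PartialOrder Υ] (Γ : Set Υ) : Prop :=
  ∀ t ∈ Γ, ∃ u ∈ Γ, ∃ v ∈ Γ, t ≤ u ∧ t ≤ v ∧ ¬ u ≤ v ∧ ¬ v ≤ u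

/-- `ρ` is constant on no (nonempty) ever-branching subset. -/
def ConstOnNoEverBranching {Υ : Type*} [PartialOrder Υ] (ρ : Υ → ℝ) : Prop :=
  ∀ Γ : Set Υ, Γ.Nonempty → EverBranching Γ → ¬ ∃ c : ℝ, ∀ t ∈ Γ, ρ t = c

/-- The function `μ` associated with an equivalent norm `n` on `C₀(Υ)`:
`μ t` is the infimum of `n f` over all `f` of the form `𝟙_(0,t] + f'` with
`f'` supported in `(t, ∞)`. -/
def muFn {Υ : Type*} [PartialOrder Υ] (n : C0Tree Υ → ℝ) (t : Υ) : ℝ :=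
  sInf (n '' {f : C0Tree Υ |
    (∀ s : Υ, s ≤ t → f (toTree s) = 1) ∧
    ∀ s : Υ, ¬ s ≤ t → ¬ t < s → f (toTree s) = 0})

/-- A copy of `α` carrying the discrete topology. -/
def DiscreteOf (α : Type*) : Type _ := α

instance (α : Type*) : TopologicalSpace (DiscreteOf α) := ⊥
instance (α : Type*) : DiscreteTopology (DiscreteOf α) := ⟨rfl⟩

/-- The space `c₀(α)` with its sup norm. -/
abbrev c0 (α : Type*) := ZeroAtInftyContinuousMap (DiscreteOf α) ℝ

/-- Identification of `α` with its discrete copy. -/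
def toDisc {α : Type*} (a : α) : DiscreteOf α := a

end

section Aux
variable {Υ : Type*} [PartialOrder Υ]

lemma my_cmp (htree : IsTree Υ) {x y s : Υ} (hx : x ≤ s) (hy : y ≤ s) :
    x ≤ y ∨ y ≤ x := by
  rcases eq_or_lt_of_le hx with rfl | hx'
  · right; exact hy
  rcases eq_or_lt_of_le hy with rfl | hy'
  · left; exact hx
  have := htree s
  rcases @trichotomous _ (· < ·) (htree s).toTrichotomous ⟨x, hx'⟩ ⟨y, hy'⟩ with h | h | h
  · exact Or.inl (le_of_lt (by exact_mod_cast h))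
  · exact Or.inl (le_of_eq (congrArg Subtype.val h))
  · exact Or.inr (le_of_lt (by exact_mod_cast h))

lemma exists_min_le (htree : IsTree Υ) {s : Υ} {D : Set Υ} (hD : ∀ d ∈ D, d ≤ s)
    (hne : D.Nonempty) : ∃ d₀ ∈ D, ∀ d ∈ D, d₀ ≤ d := by
  by_cases h : (D ∩ Set.Iio s).Nonempty
  · obtain ⟨d₀, hd₀, hmin⟩ := (htree s).toIsWellFounded.wf.has_min
      {x : {y : Υ // y < s} | (x : Υ) ∈ D}
      (by obtain ⟨d, hd⟩ := h; exact ⟨⟨d, hd.2⟩, hd.1⟩)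
    refine ⟨d₀, hd₀, ?_⟩
    intro d hd
    rcases eq_or_lt_of_le (hD d hd) with rfl | hds
    · exact le_of_lt d₀.2
    · rcases @trichotomous _ (· < ·) (htree s).toTrichotomous ⟨d, hds⟩ d₀ with hh | hh | hh
      · exact absurd hh (hmin ⟨d, hds⟩ hd)
      · exact le_of_eq (congrArg Subtype.val hh).symm
      · exact le_of_lt (by exact_mod_cast hh)
  · have hns : ∀ x ∈ D, ¬ x < s := by simpa [Set.Nonempty] using h
    obtain ⟨d, hd⟩ := hne
    have hds : d = s := by
      rcases eq_or_lt_of_le (hD d hd) with rfl | h'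
      · rfl
      · exact absurd h' (hns d hd)
    subst hds
    refine ⟨d, hd, ?_⟩
    intro d' hd'
    have : d' = d := by
      rcases eq_or_lt_of_le (hD d' hd') with rfl | h'
      · rfl
      · exact absurd h' (hns d' hd')
    exact this.ge

lemma exists_greatest_meet (htree : IsTree Υ) (hH : IsHausdorffTree Υ) {r s : Υ}
    (hne : (Set.Iic r ∩ Set.Iic s).Nonempty) :
    ∃ m, IsGreatest (Set.Iic r ∩ Set.Iic s) m := by
  by_cases hrs : r ≤ s
  · exact ⟨r, ⟨le_refl r, hrs⟩, fun x hx => hx.1⟩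
  by_cases hsr : s ≤ r
  · exact ⟨s, ⟨hsr, le_refl s⟩, fun x hx => hx.2⟩
  by_contra hng
  push_neg at hng
  have hng' : ∀ x, x ∈ Set.Iic r ∩ Set.Iic s → ∃ b ∈ Set.Iic r ∩ Set.Iic s, ¬ b ≤ x := by
    intro x hx
    by_contra hb
    push_neg at hb
    exact hng x ⟨hx, hb⟩
  clear hng
  set C := Set.Iic r ∩ Set.Iic s with hCdef
  obtain ⟨e₀, he₀, he₀min⟩ := exists_min_le htree (D := {d | d ≤ r ∧ d ∉ C})
    (fun d hd => hd.1) ⟨r, le_refl r, fun hC => hrs hC.2⟩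
  obtain ⟨d₀, hd₀, hd₀min⟩ := exists_min_le htree (D := {d | d ≤ s ∧ d ∉ C})
    (fun d hd => hd.1) ⟨s, le_refl s, fun hC => hsr hC.1⟩
  have hCd : C = Set.Iio d₀ := by
    ext x
    constructor
    · intro hx
      have hcmp := my_cmp htree hx.2 hd₀.1
      rcases hcmp with h | h
      · rcases eq_or_lt_of_le h with rfl | h'
        · exact absurd hx hd₀.2
        · exact h'
      · exact absurd ⟨h.trans hx.1, h.trans hx.2⟩ hd₀.2
    · intro hx
      by_contra hxC
      exact absurd (hd₀min x ⟨(le_of_lt hx).trans hd₀.1, hxC⟩) (not_le_of_gt hx)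
  have hCe : C = Set.Iio e₀ := by
    ext x
    constructor
    · intro hx
      have hcmp := my_cmp htree hx.1 he₀.1
      rcases hcmp with h | h
      · rcases eq_or_lt_of_le h with rfl | h'
        · exact absurd hx he₀.2
        · exact h'
      · exact absurd ⟨h.trans hx.1, h.trans hx.2⟩ he₀.2
    · intro hx
      by_contra hxC
      exact absurd (he₀min x ⟨(le_of_lt hx).trans he₀.1, hxC⟩) (not_le_of_gt hx)
  have h1 : (Set.Iio d₀).Nonempty := hCd ▸ hne
  have h2 : ∀ x, x < d₀ → ∃ x', x < x' ∧ x' < d₀ := by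
    intro x hx
    have hxC : x ∈ C := by rw [hCd]; exact hx
    obtain ⟨b, hbC, hbx⟩ := hng' x hxC
    have : x < b := by
      rcases my_cmp htree hxC.2 hbC.2 with h | h
      · exact lt_of_le_of_ne h (fun he => hbx he.ge)
      · exact absurd h hbx
    refine ⟨b, this, ?_⟩
    have := hbC
    rw [hCd] at this
    exact this
  have hde : d₀ = e₀ := hH d₀ e₀ h1 h2 (by rw [← hCd, hCe])
  have : d₀ ∈ C := ⟨hde ▸ he₀.1, hd₀.1⟩
  rw [hCd] at this
  exact absurd this (lt_irrefl d₀)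

end Aux
section Aux2
open scoped Classical
variable {Υ : Type*} [PartialOrder Υ]

/-- Identification of the topological tree with the underlying order. -/
def ofTree {Υ : Type*} [PartialOrder Υ] (s : TreeSpace Υ) : Υ := s

lemma isOpen_Iic_tree (t : Υ) : IsOpen (X := TreeSpace Υ) ((Set.Iic t : Set Υ)) :=
  TopologicalSpace.isOpen_generateFrom_of_mem (Or.inl ⟨t, rfl⟩)

lemma isClosed_Iic_tree (t : Υ) : IsClosed (X := TreeSpace Υ) ((Set.Iic t : Set Υ)) := by
  exact isOpen_compl_iff.1 (TopologicalSpace.isOpen_generateFrom_of_mem (Or.inr ⟨t, rfl⟩))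

lemma isCompact_Iic_tree (htree : IsTree Υ) (hH : IsHausdorffTree Υ) (t : Υ) :
    IsCompact (X := TreeSpace Υ) ((Set.Iic t : Set Υ)) := by
  refine isCompact_iff_ultrafilter_le_nhds.2 ?_
  intro F hF
  have htmem : (Set.Iic t : Set Υ) ∈ F := Filter.le_principal_iff.1 hF
  set A := {s : Υ | s ≤ t ∧ (Set.Iic s : Set Υ) ∈ F} with hA
  have htA : t ∈ A := ⟨le_refl t, htmem⟩
  obtain ⟨s₀, hs₀A, hs₀min⟩ := exists_min_le htree (fun d hd => hd.1) ⟨t, htA⟩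
  refine ⟨s₀, hs₀A.1, ?_⟩
  have hnhds : (𝓝 (toTree s₀)) = ⨅ S ∈ {S : Set Υ | s₀ ∈ S ∧
      S ∈ (({S | ∃ u : Υ, S = Set.Iic u} ∪ {S | ∃ u : Υ, S = (Set.Iic u)ᶜ} : Set (Set Υ)))},
      𝓟 S :=
    TopologicalSpace.nhds_generateFrom
  refine le_of_le_of_eq (le_iInf₂ ?_) hnhds.symm
  rintro S ⟨hmem, ⟨r, rfl⟩ | ⟨r, rfl⟩⟩
  · refine Filter.le_principal_iff.2 ?_
    exact Filter.mem_of_superset hs₀A.2 (Set.Iic_subset_Iic.2 hmem)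
  · refine Filter.le_principal_iff.2 ?_
    rcases Ultrafilter.mem_or_compl_mem F (Set.Iic r : Set Υ) with h | h
    · exfalso
      have hC : ((Set.Iic r ∩ Set.Iic s₀ : Set Υ)) ∈ F := Filter.inter_mem h hs₀A.2
      have hne : (Set.Iic r ∩ Set.Iic s₀ : Set Υ).Nonempty := Ultrafilter.nonempty_of_mem hC
      obtain ⟨m, hm⟩ := exists_greatest_meet htree hH hne
      have hCm : (Set.Iic r ∩ Set.Iic s₀ : Set Υ) = Set.Iic m := by
        ext x
        exact ⟨fun hx => hm.2 hx, fun hx => ⟨hx.trans hm.1.1, hx.trans hm.1.2⟩⟩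
      have hmA : m ∈ A := ⟨hm.1.2.trans hs₀A.1, by rw [← hCm]; exact hC⟩
      exact hmem (le_trans (hs₀min m hmA) hm.1.1)
    · exact h

/-- The indicator of `(0, t]` as an element of `C₀(Υ)`. -/
noncomputable def indC0 (htree : IsTree Υ) (hH : IsHausdorffTree Υ) (t : Υ) : C0Tree Υ where
  toFun := fun s : TreeSpace Υ => if ofTree s ≤ t then (1 : ℝ) else 0
  continuous_toFun := by
    have hcl : IsClopen (X := TreeSpace Υ) ((Set.Iic t : Set Υ)) :=
      ⟨isClosed_Iic_tree t, isOpen_Iic_tree t⟩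
    rw [continuous_def]
    intro V hV
    have hIic : {s : TreeSpace Υ | ofTree s ≤ t} = (Set.Iic t : Set Υ) := rfl
    have hpre : (fun s : TreeSpace Υ => if ofTree s ≤ t then (1 : ℝ) else 0) ⁻¹' V =
        if (1 : ℝ) ∈ V then (if (0 : ℝ) ∈ V then Set.univ
          else {s : TreeSpace Υ | ofTree s ≤ t})
        else (if (0 : ℝ) ∈ V then {s : TreeSpace Υ | ofTree s ≤ t}ᶜ else ∅) := by
      ext s
      by_cases h1 : (1 : ℝ) ∈ V <;> by_cases h0 : (0 : ℝ) ∈ V <;>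
        by_cases hs : ofTree s ≤ t <;>
        simp [h1, h0, hs, Set.mem_preimage, Set.mem_setOf_eq]
    rw [hpre]
    split_ifs
    · exact isOpen_univ
    · exact hIic ▸ hcl.2
    · exact hIic ▸ hcl.1.isOpen_compl
    · exact isOpen_empty
  zero_at_infty' := by
    refine Filter.Tendsto.congr' ?_ tendsto_const_nhds
    rw [Filter.eventuallyEq_iff_exists_mem]
    refine ⟨((Set.Iic t : Set Υ))ᶜ, ?_, ?_⟩
    · rw [Filter.mem_cocompact]
      exact ⟨_, isCompact_Iic_tree htree hH t, subset_rfl⟩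
    · intro s hs
      have : ¬ ofTree s ≤ t := hs
      simp [this]

lemma indC0_apply (htree : IsTree Υ) (hH : IsHausdorffTree Υ) (t : Υ) (s : Υ) :
    indC0 htree hH t (toTree s) = if s ≤ t then (1 : ℝ) else 0 := rfl

end Aux2
section Aux3
variable {Υ : Type*} [PartialOrder Υ]

lemma zai_sum_apply {α : Type*} [TopologicalSpace α] (s : Finset ℕ)
    (g : ℕ → ZeroAtInftyContinuousMap α ℝ) (x : α) :
    (∑ k ∈ s, g k) x = ∑ k ∈ s, g k x := by
  classical
  induction s using Finset.induction_on with
  | empty => simp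
  | insert a s' h ih => rw [Finset.sum_insert h, Finset.sum_insert h,
      ZeroAtInftyContinuousMap.coe_add, Pi.add_apply, ih]

lemma abs_eval_le_norm (f : C0Tree Υ) (x : TreeSpace Υ) : |f x| ≤ ‖f‖ := by
  rw [← ZeroAtInftyContinuousMap.norm_toBCF_eq_norm, ← Real.norm_eq_abs]
  exact BoundedContinuousFunction.norm_coe_le_norm f.toBCF x

lemma c0tree_norm_le (f : C0Tree Υ) (M : ℝ) (h0 : 0 ≤ M) (h : ∀ x, |f x| ≤ M) : ‖f‖ ≤ M := by
  rw [← ZeroAtInftyContinuousMap.norm_toBCF_eq_norm]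
  exact (BoundedContinuousFunction.norm_le h0).2 (by simpa [Real.norm_eq_abs] using h)

/-- Evaluation at a point as a continuous linear functional. -/
noncomputable def evalCLM (x : TreeSpace Υ) : C0Tree Υ →L[ℝ] ℝ :=
  LinearMap.mkContinuous
    { toFun := fun f => f x
      map_add' := fun f g => by simp
      map_smul' := fun a f => by simp }
    1 (fun f => by simpa [Real.norm_eq_abs] using abs_eval_le_norm f x)

lemma evalCLM_apply (x : TreeSpace Υ) (f : C0Tree Υ) : evalCLM x f = f x := rfl

/-- Functionals vanish along a bounded sequence with pairwise disjoint supports. -/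
lemma tendsto_zero_of_disjoint_supports (h : ℕ → C0Tree Υ) (V : ℕ → Set Υ)
    (hdisj : ∀ j k, j ≠ k → V j ∩ V k = ∅)
    (hsupp : ∀ (k : ℕ) (s : Υ), s ∉ V k → h k (toTree s) = 0)
    (M : ℝ) (hM0 : 0 ≤ M) (hM : ∀ (k : ℕ) (s : Υ), |h k (toTree s)| ≤ M)
    (ξ : C0Tree Υ →L[ℝ] ℝ) : Tendsto (fun k => ξ (h k)) atTop (𝓝 0) := by
  classical
  have habs : ∀ N : ℕ, ∑ k ∈ Finset.range N, |ξ (h k)| ≤ ‖ξ‖ * M := by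
    intro N
    set ε : ℕ → ℝ := fun k => if 0 ≤ ξ (h k) then 1 else -1 with hε
    set g : C0Tree Υ := ∑ k ∈ Finset.range N, ε k • h k with hg
    have hξg : ξ g = ∑ k ∈ Finset.range N, |ξ (h k)| := by
      rw [hg, map_sum]
      refine Finset.sum_congr rfl ?_
      intro k _
      rw [map_smul, smul_eq_mul]
      by_cases hk : 0 ≤ ξ (h k)
      · simp [hε, hk, abs_of_nonneg hk]
      · simp [hε, hk, abs_of_neg (lt_of_not_ge hk)]
    have hgnorm : ‖g‖ ≤ M := by
      refine c0tree_norm_le g M hM0 ?_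
      intro x
      have hgx : g x = ∑ k ∈ Finset.range N, ε k * h k x := by
        rw [hg, zai_sum_apply]
        refine Finset.sum_congr rfl ?_
        intro k _
        rw [ZeroAtInftyContinuousMap.coe_smul]
        rfl
      by_cases hx : ∃ k ∈ Finset.range N, (ofTree x) ∈ V k
      · obtain ⟨k₀, hk₀N, hk₀⟩ := hx
        have hsum : g x = ε k₀ * h k₀ x := by
          rw [hgx]
          refine Finset.sum_eq_single k₀ ?_ (fun hN => absurd hk₀N hN)
          intro j hjN hjk
          have : (ofTree x) ∉ V j := by
            intro hmem
            have := hdisj j k₀ hjk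
            exact absurd (Set.mem_inter hmem hk₀) (by rw [this]; exact Set.notMem_empty _)
          have hz : h j x = 0 := hsupp j (ofTree x) this
          rw [hz, mul_zero]
        rw [hsum, abs_mul]
        have : |ε k₀| = 1 := by by_cases hk : 0 ≤ ξ (h k₀) <;> simp [hε, hk]
        rw [this, one_mul]
        exact hM k₀ (ofTree x)
      · push_neg at hx
        have : g x = 0 := by
          rw [hgx]
          refine Finset.sum_eq_zero ?_
          intro j hjN
          have hz : h j x = 0 := hsupp j (ofTree x) (hx j hjN)
          rw [hz, mul_zero]
        rw [this, abs_zero]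
        exact hM0
    calc ∑ k ∈ Finset.range N, |ξ (h k)| = ξ g := hξg.symm
      _ ≤ |ξ g| := le_abs_self _
      _ ≤ ‖ξ‖ * ‖g‖ := by rw [← Real.norm_eq_abs]; exact ξ.le_opNorm g
      _ ≤ ‖ξ‖ * M := mul_le_mul_of_nonneg_left hgnorm (norm_nonneg ξ)
  have hsummable : Summable fun k => |ξ (h k)| :=
    summable_of_sum_range_le (fun k => abs_nonneg _) habs
  exact (tendsto_zero_iff_abs_tendsto_zero _).2 hsummable.tendsto_atTop_zero

end Aux3
section Aux4
variable {Υ : Type*} [PartialOrder Υ]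

/-- The set of competitors defining `muFn`. -/
def compSet (t : Υ) : Set (C0Tree Υ) :=
  {f : C0Tree Υ | (∀ s : Υ, s ≤ t → f (toTree s) = 1) ∧
    ∀ s : Υ, ¬ s ≤ t → ¬ t < s → f (toTree s) = 0}

lemma muFn_eq (n : C0Tree Υ → ℝ) (t : Υ) : muFn n t = sInf (n '' compSet t) := rfl

lemma indC0_mem_compSet (htree : IsTree Υ) (hH : IsHausdorffTree Υ) (t : Υ) :
    indC0 htree hH t ∈ compSet t := by
  constructor
  · intro s hs; rw [indC0_apply, if_pos hs]
  · intro s hs _; rw [indC0_apply, if_neg hs]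

lemma compSet_antitone (htree : IsTree Υ) {t u : Υ} (h : t < u) :
    compSet (Υ := Υ) u ⊆ compSet t := by
  rintro f ⟨h1, h2⟩
  constructor
  · intro s hs
    exact h1 s (hs.trans h.le)
  · intro s hst hts
    refine h2 s ?_ ?_
    · intro hsu
      rcases my_cmp htree hsu h.le with hh | hh
      · exact hst hh
      · rcases eq_or_lt_of_le hh with rfl | hh'
        · exact hst (le_refl _)
        · exact hts hh'
    · intro hus
      exact hts (h.trans hus)
end Aux4

/-- Proposition 3.2: if `C₀(Υ)` has an equivalent Kadec norm, the associated function `μ`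
has no bad points. -/
theorem statement4 {Υ : Type*} [PartialOrder Υ] (htree : IsTree Υ)
    (hH : IsHausdorffTree Υ)
    (n : C0Tree Υ → ℝ) (hn : IsEquivNorm n) (hK : IsKadec n) :
    ∀ t : Υ, GoodPoint (muFn n) t := by
  classical
  intro t
  by_contra hgood
  rw [GoodPoint] at hgood
  push_neg at hgood
  obtain ⟨c, C, hc, hbd⟩ := hn.2.2
  set m := muFn n t with hm
  -- basic facts about n
  have hn0 : ∀ g : C0Tree Υ, 0 ≤ n g := fun g =>
    le_trans (mul_nonneg hc.le (norm_nonneg g)) (hbd g).1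
  -- competitor set facts
  have hcomp_ne : ∀ v : Υ, (n '' compSet v).Nonempty :=
    fun v => ⟨n (indC0 htree hH v), Set.mem_image_of_mem n (indC0_mem_compSet htree hH v)⟩
  have hcomp_lb : ∀ v : Υ, ∀ y ∈ n '' compSet v, c ≤ y := by
    rintro v y ⟨g, hg, rfl⟩
    have h1 : (1 : ℝ) ≤ ‖g‖ := by
      have := abs_eval_le_norm g (toTree v)
      rw [hg.1 v (le_refl v)] at this
      simpa using this
    calc c = c * 1 := (mul_one c).symm
      _ ≤ c * ‖g‖ := by nlinarith
      _ ≤ n g := (hbd g).1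
  have hbdd : ∀ v : Υ, BddBelow (n '' compSet v) := fun v => ⟨c, hcomp_lb v⟩
  have hmc : c ≤ m := le_csInf (hcomp_ne t) (hcomp_lb t)
  have hmpos : 0 < m := lt_of_lt_of_le hc hmc
  have hmu_le : ∀ (v : Υ) (g : C0Tree Υ), g ∈ compSet v → muFn n v ≤ n g :=
    fun v g hg => csInf_le (hbdd v) (Set.mem_image_of_mem n hg)
  -- the bad point gives a sequence of distinct immediate successors
  have key : ∀ (F : Finset Υ) (k : ℕ), ∃ v, t ⋖ v ∧ v ∉ F ∧ muFn n v < m + 1/(k+1) := by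
    intro F k
    refine hgood F (m + 1/(k+1)) ?_
    have : (0:ℝ) < 1/(k+1) := by positivity
    linarith
  choose step hstep1 hstep2 hstep3 using key
  set P : ℕ → Finset Υ × Υ := fun k =>
    Nat.rec (⟨∅, step ∅ 0⟩) (fun k ih => ⟨insert ih.2 ih.1, step (insert ih.2 ih.1) (k+1)⟩) k
    with hP
  set u : ℕ → Υ := fun k => (P k).2 with hudef
  have hu : ∀ k, u k = step (P k).1 k := fun k => by cases k <;> rfl
  have hcov : ∀ k, t ⋖ u k := fun k => (hu k) ▸ hstep1 (P k).1 k
  have hnotmem : ∀ k, u k ∉ (P k).1 := fun k => (hu k) ▸ hstep2 (P k).1 k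
  have hmuk : ∀ k, muFn n (u k) < m + 1/(k+1) := fun k => (hu k) ▸ hstep3 (P k).1 k
  have hFmono : ∀ j k, j ≤ k → (P j).1 ⊆ (P k).1 := by
    intro j k hjk
    induction k with
    | zero => rw [Nat.le_zero.1 hjk]
    | succ k ih =>
      rcases Nat.lt_or_ge j (k+1) with h | h
      · exact (ih (Nat.lt_succ_iff.1 h)).trans (Finset.subset_insert _ _)
      · rw [Nat.le_antisymm hjk h]
  have huj_mem : ∀ j k, j < k → u j ∈ (P k).1 := by
    intro j k hjk
    have h1 : u j ∈ (P (j+1)).1 := Finset.mem_insert_self _ _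
    exact hFmono (j+1) k hjk h1
  have hune : ∀ j k, j ≠ k → u j ≠ u k := by
    intro j k hjk heq
    rcases Nat.lt_or_ge j k with h | h
    · exact hnotmem k (heq ▸ huj_mem j k h)
    · exact hnotmem j (heq.symm ▸ huj_mem k j (lt_of_le_of_ne h (Ne.symm hjk)))
  -- incomparability of distinct immediate successors
  have hinc : ∀ j k, j ≠ k → ∀ s : Υ, ¬(u j ≤ s ∧ u k ≤ s) := by
    rintro j k hjk s ⟨hjs, hks⟩
    rcases my_cmp htree hjs hks with h | h
    · rcases eq_or_lt_of_le h with heq | hlt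
      · exact hune j k hjk heq
      · exact (hcov k).2 (hcov j).1 hlt
    · rcases eq_or_lt_of_le h with heq | hlt
      · exact hune j k hjk heq.symm
      · exact (hcov j).2 (hcov k).1 hlt
  -- choose near-optimal competitors
  have hf_ex : ∀ k : ℕ, ∃ g : C0Tree Υ, g ∈ compSet (u k) ∧ n g < m + 2/(k+1) := by
    intro k
    have hpos : (0:ℝ) < 1/(k+1) := by positivity
    obtain ⟨y, hy, hylt⟩ := Real.lt_sInf_add_pos (hcomp_ne (u k)) hpos
    obtain ⟨g, hg, rfl⟩ := hy
    refine ⟨g, hg, ?_⟩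
    have h2 : sInf (n '' compSet (u k)) = muFn n (u k) := (muFn_eq n (u k)).symm
    rw [h2] at hylt
    have := hmuk k
    have h3 : (2:ℝ)/(k+1) = 1/(k+1) + 1/(k+1) := by ring
    linarith
  choose f hfmem hfn using hf_ex
  have hfcompt : ∀ k, f k ∈ compSet t := fun k => compSet_antitone htree (hcov k).1 (hfmem k)
  have hflb : ∀ k, m ≤ n (f k) := fun k => hmu_le t (f k) (hfcompt k)
  have haux2 : Tendsto (fun k : ℕ => (2:ℝ)/(k+1)) atTop (𝓝 0) := by
    have := tendsto_one_div_add_atTop_nhds_zero_nat.const_mul (2:ℝ)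
    rw [mul_zero] at this
    refine this.congr (fun k => ?_)
    rw [mul_one_div]
  have htendn : Tendsto (fun k => n (f k)) atTop (𝓝 m) := by
    refine tendsto_of_tendsto_of_tendsto_of_le_of_le tendsto_const_nhds
      (by simpa using tendsto_const_nhds.add haux2) hflb (fun k => (hfn k).le)
  have hnfk_le : ∀ k, n (f k) ≤ m + 2 := by
    intro k
    have h1 : (2:ℝ)/(k+1) ≤ 2 := by
      rw [div_le_iff₀ (by positivity)]
      nlinarith [Nat.cast_nonneg (α := ℝ) k]
    linarith [hfn k]
  have hnfpos : ∀ k, 0 < n (f k) := fun k => lt_of_lt_of_le hmpos (hflb k)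
  -- the indicator of (0, t]
  set e : C0Tree Υ := indC0 htree hH t with he
  have hecomp : e ∈ compSet t := indC0_mem_compSet htree hH t
  have hme : m ≤ n e := hmu_le t e hecomp
  -- h k = f k - e has support in V k
  set V : ℕ → Set Υ := fun k => {s : Υ | u k ≤ s} with hV
  have hdisj : ∀ j k, j ≠ k → V j ∩ V k = ∅ := by
    intro j k hjk
    rw [Set.eq_empty_iff_forall_notMem]
    intro s hs
    exact hinc j k hjk s ⟨hs.1, hs.2⟩
  have hsupp : ∀ (k : ℕ) (s : Υ), s ∉ V k → (f k - e) (toTree s) = 0 := by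
    intro k s hs
    have hs' : ¬ u k ≤ s := hs
    have heval : (f k - e) (toTree s) = f k (toTree s) - e (toTree s) := by
      rw [ZeroAtInftyContinuousMap.coe_sub]; rfl
    rw [heval]
    by_cases hst : s ≤ t
    · rw [(hfmem k).1 s (hst.trans (hcov k).1.le), he, indC0_apply, if_pos hst, sub_self]
    · have he0 : e (toTree s) = 0 := by rw [he, indC0_apply, if_neg hst]
      have hf0 : f k (toTree s) = 0 := by
        refine (hfmem k).2 s ?_ ?_
        · intro hsu
          rcases my_cmp htree hsu (hcov k).1.le with h | h
          · exact hst h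
          · rcases eq_or_lt_of_le h with rfl | hts
            · exact hst (le_refl _)
            · rcases eq_or_lt_of_le hsu with rfl | hlt
              · exact hs' (le_refl _)
              · exact (hcov k).2 hts hlt
        · intro hus
          exact hs' hus.le
      rw [he0, hf0, sub_self]
    -- uniform bound on f k - e
  have hMbound : ∀ (k : ℕ) (s : Υ), |(f k - e) (toTree s)| ≤ (m+2)/c + 1 := by
    intro k s
    have heval : (f k - e) (toTree s) = f k (toTree s) - e (toTree s) := by
      rw [ZeroAtInftyContinuousMap.coe_sub]; rfl
    rw [heval]
    have h1 : |f k (toTree s)| ≤ (m+2)/c := by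
      have h1a := abs_eval_le_norm (f k) (toTree s)
      have h2 : ‖f k‖ ≤ (m+2)/c := by
        rw [le_div_iff₀ hc]
        calc ‖f k‖ * c = c * ‖f k‖ := mul_comm _ _
          _ ≤ n (f k) := (hbd (f k)).1
          _ ≤ m + 2 := hnfk_le k
      linarith
    have h3 : |e (toTree s)| ≤ 1 := by
      rw [he, indC0_apply]; split_ifs <;> simp
    have h4 : |f k (toTree s) - e (toTree s)| ≤ |f k (toTree s)| + |e (toTree s)| :=
      abs_sub _ _
    linarith
  have hM0 : (0:ℝ) ≤ (m+2)/c + 1 := by positivity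
  -- weak convergence of f k to e
  have hweak : ∀ ξ : C0Tree Υ →L[ℝ] ℝ, Tendsto (fun k => ξ (f k)) atTop (𝓝 (ξ e)) := by
    intro ξ
    have h0 := tendsto_zero_of_disjoint_supports (fun k => f k - e) V hdisj hsupp
      ((m+2)/c + 1) hM0 hMbound ξ
    have heq : (fun k => ξ (f k)) = fun k => ξ (f k - e) + ξ e := by
      funext k; rw [map_sub]; ring
    rw [heq]
    have hfin := h0.add (tendsto_const_nhds (x := ξ e))
    rw [zero_add] at hfin
    exact hfin
  -- Hahn–Banach: n e = m
  have hn_zero : n 0 = 0 := by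
    have := hn.1 0 0
    simpa using this
  have he0 : e ≠ 0 := by
    intro h0
    rw [h0, hn_zero] at hme
    linarith
  have hnneg : ∀ g : C0Tree Υ, n (-g) = n g := by
    intro g
    have := hn.1 (-1) g
    simpa using this
  have hdombound : ∀ x : (LinearPMap.mkSpanSingleton (K := ℝ) (L := ℝ) (σ := RingHom.id ℝ) e (n e) he0).domain,
      (LinearPMap.mkSpanSingleton (K := ℝ) (L := ℝ) (σ := RingHom.id ℝ) e (n e) he0) x ≤ n x := by
    intro x
    obtain ⟨a, ha⟩ := Submodule.mem_span_singleton.1 x.2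
    have hxx : x = a • (⟨e, Submodule.mem_span_singleton_self e⟩ :
        (LinearPMap.mkSpanSingleton (K := ℝ) (L := ℝ) (σ := RingHom.id ℝ) e (n e) he0).domain) :=
      Subtype.ext (by rw [← ha]; rfl)
    rw [hxx, LinearPMap.map_smul, LinearPMap.mkSpanSingleton_apply]
    have hval : ((a • (⟨e, Submodule.mem_span_singleton_self e⟩ :
        (LinearPMap.mkSpanSingleton (K := ℝ) (L := ℝ) (σ := RingHom.id ℝ) e (n e) he0).domain) : _) : C0Tree Υ) = a • e := rfl
    rw [hval, hn.1, smul_eq_mul]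
    rcases le_or_gt 0 a with hanneg | haneg
    · rw [abs_of_nonneg hanneg]
    · have h1 : a * n e < 0 := mul_neg_of_neg_of_pos haneg (by linarith)
      have h2 : 0 ≤ |a| * n e := mul_nonneg (abs_nonneg a) (hn0 e)
      linarith
  obtain ⟨φ₀, hφ₀dom, hφ₀le⟩ := exists_extension_of_le_sublinear
    (LinearPMap.mkSpanSingleton (K := ℝ) (L := ℝ) (σ := RingHom.id ℝ) e (n e) he0) n
    (fun a ha x => by rw [hn.1, abs_of_pos ha]) hn.2.1 hdombound
  have hφe : φ₀ e = n e := by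
    have h1 := hφ₀dom ⟨e, Submodule.mem_span_singleton_self e⟩
    rw [LinearPMap.mkSpanSingleton_apply] at h1
    exact h1
  have hφbound : ∀ g : C0Tree Υ, ‖φ₀ g‖ ≤ C * ‖g‖ := by
    intro g
    rw [Real.norm_eq_abs, abs_le]
    constructor
    · have h1 : φ₀ (-g) ≤ n (-g) := hφ₀le (-g)
      rw [map_neg, hnneg] at h1
      have h2 : n g ≤ C * ‖g‖ := (hbd g).2
      linarith
    · exact (hφ₀le g).trans (hbd g).2
  set φ : C0Tree Υ →L[ℝ] ℝ := LinearMap.mkContinuous φ₀ C hφbound with hφ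
  have hφapp : ∀ g : C0Tree Υ, φ g = φ₀ g := fun g => rfl
  have hnem : n e ≤ m := by
    have h1 : Tendsto (fun k => φ (f k)) atTop (𝓝 (φ e)) := hweak φ
    have h2 : Tendsto (fun k : ℕ => m + 2/(k+1)) atTop (𝓝 m) := by
      simpa using tendsto_const_nhds.add haux2
    have h3 : ∀ k, φ (f k) ≤ m + 2/(k+1) := by
      intro k
      rw [hφapp]
      exact (hφ₀le (f k)).trans (hfn k).le
    have h4 : φ e ≤ m := le_of_tendsto_of_tendsto' h1 h2 h3
    rw [hφapp, hφe] at h4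
    exact h4
  have hneqm : n e = m := le_antisymm hnem hme
  -- the Kadec property yields norm convergence of the normalized sequence
  have hxk_mem : ∀ k, n ((n (f k))⁻¹ • f k) = 1 := fun k => by
    rw [hn.1, abs_of_pos (inv_pos.2 (hnfpos k)), inv_mul_cancel₀ (ne_of_gt (hnfpos k))]
  have hx_mem : n (m⁻¹ • e) = 1 := by
    rw [hn.1, abs_of_pos (inv_pos.2 hmpos), hneqm, inv_mul_cancel₀ (ne_of_gt hmpos)]
  set xk : ℕ → {g : C0Tree Υ // n g = 1} := fun k => ⟨(n (f k))⁻¹ • f k, hxk_mem k⟩ with hxk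
  set x0 : {g : C0Tree Υ // n g = 1} := ⟨m⁻¹ • e, hx_mem⟩ with hx0
  have hwk2 : Tendsto (fun k => ((xk k : C0Tree Υ))) atTop
      (@nhds _ (weakTopology (C0Tree Υ)) (x0 : C0Tree Υ)) := by
    have hwt : weakTopology (C0Tree Υ) =
        ⨅ ξ : C0Tree Υ →L[ℝ] ℝ, TopologicalSpace.induced (fun g => ξ g) inferInstance := rfl
    rw [hwt, _root_.nhds_iInf, Filter.tendsto_iInf]
    intro ξ
    rw [nhds_induced, Filter.tendsto_comap_iff]
    have hsm : ∀ (a : ℝ) (g : C0Tree Υ), ξ (a • g) = a * ξ g := fun a g => by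
      rw [map_smul, smul_eq_mul]
    have hlim : Tendsto (fun k => (n (f k))⁻¹ * ξ (f k)) atTop (𝓝 (m⁻¹ * ξ e)) :=
      Tendsto.mul (htendn.inv₀ (ne_of_gt hmpos)) (hweak ξ)
    show Tendsto (fun k => ξ ((xk k : C0Tree Υ))) atTop (𝓝 (ξ (x0 : C0Tree Υ)))
    simp only [hxk, hx0, hsm]
    exact hlim
  have hT1 : Tendsto xk atTop (@nhds _ (TopologicalSpace.induced
      (Subtype.val : {g : C0Tree Υ // n g = 1} → C0Tree Υ) (weakTopology (C0Tree Υ))) x0) := by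
    rw [@nhds_induced (C0Tree Υ) {g : C0Tree Υ // n g = 1} (weakTopology (C0Tree Υ))
      Subtype.val x0]
    exact Filter.tendsto_comap_iff.2 hwk2
  rw [hK] at hT1
  have hT1' : Tendsto xk atTop (𝓝 x0) := hT1
  have hT2 : Tendsto (fun k => ((xk k : C0Tree Υ))) atTop (𝓝 (x0 : C0Tree Υ)) :=
    ((continuous_subtype_val).tendsto x0).comp hT1'
  -- contradiction by evaluating at u N
  have hm2pos : (0:ℝ) < (m+2)⁻¹ := by
    have : (0:ℝ) < m + 2 := by linarith
    exact inv_pos.2 this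
  obtain ⟨N, hN⟩ := (Metric.tendsto_atTop.1 hT2) ((m+2)⁻¹) hm2pos
  have hcontr := hN N (le_refl N)
  rw [dist_eq_norm] at hcontr
  have heval2 : ((xk N : C0Tree Υ) - (x0 : C0Tree Υ)) (toTree (u N)) = (n (f N))⁻¹ := by
    have h1 : f N (toTree (u N)) = 1 := (hfmem N).1 (u N) (le_refl _)
    have h2 : e (toTree (u N)) = 0 := by
      rw [he, indC0_apply, if_neg]
      intro hle
      exact absurd ((hcov N).1.trans_le hle) (lt_irrefl t)
    show ((((n (f N))⁻¹ • f N : C0Tree Υ)) - (m⁻¹ • e : C0Tree Υ)) (toTree (u N)) = (n (f N))⁻¹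
    rw [ZeroAtInftyContinuousMap.coe_sub, Pi.sub_apply,
      ZeroAtInftyContinuousMap.coe_smul, ZeroAtInftyContinuousMap.coe_smul,
      Pi.smul_apply, Pi.smul_apply, smul_eq_mul, smul_eq_mul, h1, h2]
    ring
  have hlow : (m+2)⁻¹ ≤ |((xk N : C0Tree Υ) - (x0 : C0Tree Υ)) (toTree (u N))| := by
    rw [heval2, abs_of_pos (inv_pos.2 (hnfpos N))]
    exact inv_anti₀ (hnfpos N) (hnfk_le N)
  have hhigh := abs_eval_le_norm ((xk N : C0Tree Υ) - (x0 : C0Tree Υ)) (toTree (u N))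
  linarith
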